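/- Let n ≥ 1 and r ≥ 0, let D = {λ ∈ ℕ^n : λ_1 + ⋯ + λ_n = r}, and for λ ∈ D let p_λ = (v^{λ_1},…,v^{λ_n}) ∈ ℚ(v)^n. Then the vanishing ideal in ℚ(v)[K_1,…,K_n] of the finite point set {p_λ : λ ∈ D} equals the ideal generated by the n+1 polynomials K_1 K_2 ⋯ K_n − v^r and (K_a − 1)(K_a − v)(K_a − v^2)⋯(K_a − v^r) for a = 1,…,n. -/

import Mathlib

open MvPolynomial
set_option synthInstance.maxHeartbeats 1000000
set_option maxHeartbeats 1000000

noncomputable section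

namespace Stmt10

abbrev F : Type := RatFunc ℚ

lemma v_pow_inj : Function.Injective (fun k : ℕ => (RatFunc.X : F) ^ k) := by
  intro i j h
  simp only at h
  rw [← RatFunc.algebraMap_X, ← map_pow, ← map_pow] at h
  have := RatFunc.algebraMap_injective ℚ h
  simpa using congrArg Polynomial.natDegree this

variable (n r : ℕ)

/-- grid points indexed by `Fin n → Fin (r+1)` -/
def pt (μ : Fin n → Fin (r + 1)) : Fin n → F := fun a => (RatFunc.X : F) ^ (μ a : ℕ)

/-- the univariate grid generators -/
def ga (a : Fin n) : MvPolynomial (Fin n) F :=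
  ∏ j ∈ Finset.range (r + 1), (X a - C ((RatFunc.X : F) ^ j))

/-- evaluation at all grid points, as a linear map -/
def ev : MvPolynomial (Fin n) F →ₗ[F] ((Fin n → Fin (r + 1)) → F) where
  toFun f := fun μ => eval (pt n r μ) f
  map_add' := by intros; funext; simp
  map_smul' := by intros; funext; simp [smul_eval]

@[simp] lemma ev_apply (f : MvPolynomial (Fin n) F) (μ) :
    ev n r f μ = eval (pt n r μ) f := rfl

def Igrid : Ideal (MvPolynomial (Fin n) F) := Ideal.span (Set.range (ga n r))

lemma eval_ga (a : Fin n) (μ : Fin n → Fin (r + 1)) : eval (pt n r μ) (ga n r a) = 0 := by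
  rw [ga, map_prod]
  apply Finset.prod_eq_zero (i := (μ a : ℕ))
  · exact Finset.mem_range.2 (μ a).isLt
  · simp [pt]

lemma Igrid_le_ker : ∀ f ∈ Igrid n r, ev n r f = 0 := by
  intro f hf
  have h : Igrid n r ≤ RingHom.ker (Pi.ringHom fun μ : Fin n → Fin (r + 1) =>
      (eval (pt n r μ) : MvPolynomial (Fin n) F →+* F)) := by
    rw [Igrid, Ideal.span_le]
    rintro _ ⟨a, rfl⟩
    simp only [SetLike.mem_coe, RingHom.mem_ker]
    funext μ
    exact eval_ga n r a μ
  have h0 := h hf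
  rw [RingHom.mem_ker] at h0
  funext μ
  exact congrFun h0 μ

/-- Lagrange interpolation polynomial at the grid point `μ`. -/
def lag (μ : Fin n → Fin (r + 1)) : MvPolynomial (Fin n) F :=
  ∏ a, ∏ j ∈ Finset.range (r + 1) \ {(μ a : ℕ)},
    (C (((RatFunc.X : F) ^ (μ a : ℕ) - (RatFunc.X : F) ^ j)⁻¹) * (X a - C ((RatFunc.X : F) ^ j)))

lemma eval_lag (μ ν : Fin n → Fin (r + 1)) :
    eval (pt n r ν) (lag n r μ) = if ν = μ then 1 else 0 := by
  rw [lag, map_prod]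
  split_ifs with hνμ
  · subst hνμ
    apply Finset.prod_eq_one
    intro a _
    rw [map_prod]
    apply Finset.prod_eq_one
    intro j hj
    have hj' : j ≠ (ν a : ℕ) := by
      simp only [Finset.mem_sdiff, Finset.mem_singleton] at hj
      exact hj.2
    have hne : (RatFunc.X : F) ^ (ν a : ℕ) - (RatFunc.X : F) ^ j ≠ 0 := by
      rw [sub_ne_zero]
      exact fun hc => hj' (v_pow_inj hc).symm
    simp only [map_mul, eval_C, map_sub, eval_X, pt]
    exact inv_mul_cancel₀ hne
  · have : ∃ a : Fin n, ν a ≠ μ a := by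
      by_contra hc
      push_neg at hc
      exact hνμ (funext hc)
    obtain ⟨a, ha⟩ := this
    apply Finset.prod_eq_zero (Finset.mem_univ a)
    rw [map_prod]
    apply Finset.prod_eq_zero (i := (ν a : ℕ))
    · simp only [Finset.mem_sdiff, Finset.mem_range, Finset.mem_singleton]
      exact ⟨(ν a).isLt, fun hc => ha (Fin.ext hc)⟩
    · simp [pt]

lemma ev_surj : Function.Surjective (ev n r) := by
  intro y
  refine ⟨∑ μ, y μ • lag n r μ, ?_⟩
  funext ν
  rw [map_sum]
  simp only [Finset.sum_apply, map_smul, Pi.smul_apply, ev_apply, eval_lag, smul_eq_mul,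
    mul_ite, mul_one, mul_zero]
  simp [Finset.sum_ite_eq]

def boxM : Submodule F (MvPolynomial (Fin n) F) :=
  Submodule.span F (Set.range fun μ : Fin n → Fin (r + 1) =>
    (monomial (Finsupp.equivFunOnFinite.symm fun a => (μ a : ℕ)) (1 : F)))

lemma totalDegree_aeval_le (a : Fin n) (p : Polynomial F) :
    (Polynomial.aeval (X a : MvPolynomial (Fin n) F) p).totalDegree ≤ p.natDegree := by
  conv_lhs => rw [p.as_sum_support, map_sum]
  refine le_trans (totalDegree_finset_sum _ _) (Finset.sup_le fun i hi => ?_)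
  rw [Polynomial.aeval_monomial, algebraMap_eq]
  refine le_trans (totalDegree_mul _ _) ?_
  rw [totalDegree_C, totalDegree_X_pow, zero_add]
  exact Polynomial.le_natDegree_of_mem_supp i hi

lemma ga_eq_aeval (a : Fin n) : ga n r a = Polynomial.aeval (X a : MvPolynomial (Fin n) F)
    (∏ j ∈ Finset.range (r + 1), (Polynomial.X - Polynomial.C ((RatFunc.X : F) ^ j))) := by
  rw [map_prod, ga]
  refine Finset.prod_congr rfl fun j _ => ?_
  rw [map_sub, Polynomial.aeval_X, Polynomial.aeval_C, algebraMap_eq]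

lemma deg_aux (a : Fin n) : (ga n r a - X a ^ (r + 1)).totalDegree ≤ r := by
  set q : Polynomial F :=
    ∏ j ∈ Finset.range (r + 1), (Polynomial.X - Polynomial.C ((RatFunc.X : F) ^ j)) with hq
  have hmonic : q.Monic :=
    Polynomial.monic_prod_of_monic _ _ fun j _ => Polynomial.monic_X_sub_C _
  have hdeg : q.natDegree = r + 1 := by
    rw [hq, Polynomial.natDegree_prod _ _ fun j _ => Polynomial.X_sub_C_ne_zero _]
    simp only [Polynomial.natDegree_X_sub_C, Finset.sum_const, Finset.card_range, smul_eq_mul,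
      mul_one]
  have hsub : (q - Polynomial.X ^ (r + 1)).degree < ((r + 1 : ℕ) : WithBot ℕ) := by
    have h1 : q.degree = (Polynomial.X ^ (r + 1) : Polynomial F).degree := by
      rw [Polynomial.degree_X_pow, Polynomial.degree_eq_natDegree hmonic.ne_zero, hdeg]
    have h2 : q.leadingCoeff = (Polynomial.X ^ (r + 1) : Polynomial F).leadingCoeff := by
      rw [hmonic.leadingCoeff, (Polynomial.monic_X_pow _).leadingCoeff]
    have := Polynomial.degree_sub_lt h1 hmonic.ne_zero h2
    rwa [Polynomial.degree_eq_natDegree hmonic.ne_zero, hdeg] at this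
  have hnat : (q - Polynomial.X ^ (r + 1)).natDegree ≤ r := by
    by_cases h0 : q - Polynomial.X ^ (r + 1) = 0
    · simp [h0]
    · have := (Polynomial.natDegree_lt_iff_degree_lt h0).2 hsub
      omega
  have heq : ga n r a - X a ^ (r + 1) =
      Polynomial.aeval (X a : MvPolynomial (Fin n) F) (q - Polynomial.X ^ (r + 1)) := by
    rw [map_sub, map_pow, Polynomial.aeval_X, ga_eq_aeval]
  rw [heq]
  exact le_trans (totalDegree_aeval_le n a _) hnat

lemma apply_le_sum (μ : Fin n →₀ ℕ) (a : Fin n) : μ a ≤ μ.sum fun _ e => e := by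
  by_cases h : a ∈ μ.support
  · exact Finset.single_le_sum (fun _ _ => Nat.zero_le _) h
  · simp [Finsupp.notMem_support_iff.mp h]

lemma mono_box_mem (μ : Fin n →₀ ℕ) (h : ∀ a, μ a ≤ r) : monomial μ (1 : F) ∈ boxM n r := by
  apply Submodule.subset_span
  refine ⟨fun a => ⟨μ a, Nat.lt_succ_of_le (h a)⟩, ?_⟩

  ext a
  simp

lemma sup_top : (Igrid n r).restrictScalars F ⊔ boxM n r = ⊤ := by
  rw [eq_top_iff]
  set N := (Igrid n r).restrictScalars F ⊔ boxM n r with hN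
  have key : ∀ d : ℕ, ∀ f : MvPolynomial (Fin n) F, f.totalDegree ≤ d → f ∈ N := by
    intro d
    induction d with
    | zero =>
      intro f hf
      rw [← f.support_sum_monomial_coeff]
      refine Submodule.sum_mem _ fun μ hμ => ?_
      have h1 : (monomial μ) (coeff μ f) = (coeff μ f) • monomial μ (1 : F) := by
        rw [smul_monomial, smul_eq_mul, mul_one]
      rw [h1]
      refine Submodule.smul_mem _ _ (Submodule.mem_sup_right (mono_box_mem n r μ fun a => ?_))
      have := le_trans (apply_le_sum n μ a) (le_trans (le_totalDegree hμ) hf)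
      omega
    | succ d ih =>
      intro f hf
      rw [← f.support_sum_monomial_coeff]
      refine Submodule.sum_mem _ fun μ hμ => ?_
      have h1 : (monomial μ) (coeff μ f) = (coeff μ f) • monomial μ (1 : F) := by
        rw [smul_monomial, smul_eq_mul, mul_one]
      rw [h1]
      refine Submodule.smul_mem _ _ ?_
      by_cases hbox : ∀ a, μ a ≤ r
      · exact Submodule.mem_sup_right (mono_box_mem n r μ hbox)
      · push_neg at hbox
        obtain ⟨a, ha⟩ := hbox
        set μ' : Fin n →₀ ℕ := μ - Finsupp.single a (r + 1) with hμ'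
        have hsum : μ' + Finsupp.single a (r + 1) = μ := by
          ext b
          by_cases hb : b = a
          · subst hb
            simp only [hμ', Finsupp.add_apply, Finsupp.tsub_apply, Finsupp.single_eq_same]
            omega
          · simp [hμ', Finsupp.single_apply, Ne.symm hb, hb]
        have hmono : monomial μ (1 : F) =
            monomial μ' 1 * ga n r a - monomial μ' 1 * (ga n r a - X a ^ (r + 1)) := by
          rw [mul_sub, sub_sub_cancel, X_pow_eq_monomial, monomial_mul, one_mul, hsum]
        rw [hmono]
        have hμsum : (μ'.sum fun _ e => e) + (r + 1) = μ.sum fun _ e => e := by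
          rw [← hsum, Finsupp.sum_add_index' (fun _ => rfl) (fun _ _ _ => rfl),
            Finsupp.sum_single_index rfl]
        have hfsum : (μ.sum fun _ e => e) ≤ d + 1 := le_trans (le_totalDegree hμ) hf
        refine sub_mem (Submodule.mem_sup_left ?_) (ih _ ?_)
        · exact Ideal.mul_mem_left _ _ (Ideal.subset_span ⟨a, rfl⟩)
        · refine le_trans (totalDegree_mul _ _) ?_
          rw [totalDegree_monomial _ (one_ne_zero)]
          have := deg_aux n r a
          omega
  intro f _
  exact key f.totalDegree f le_rfl

lemma ker_le_Igrid : ∀ f : MvPolynomial (Fin n) F, ev n r f = 0 → f ∈ Igrid n r := by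
  classical
  have hsurj' : Function.Surjective ((ev n r).domRestrict (boxM n r)) := by
    intro y
    obtain ⟨f, hf⟩ := ev_surj n r y
    have hft : f ∈ (Igrid n r).restrictScalars F ⊔ boxM n r := by
      rw [sup_top]; trivial
    obtain ⟨i, hi, m, hm, him⟩ := Submodule.mem_sup.mp hft
    refine ⟨⟨m, hm⟩, ?_⟩
    rw [LinearMap.domRestrict_apply, ← hf, ← him, map_add, Igrid_le_ker n r i hi, zero_add]
  have hfd : FiniteDimensional F (boxM n r) :=
    FiniteDimensional.span_of_finite F (Set.finite_range _)
  have h1 : Module.finrank F (boxM n r) ≤ Fintype.card (Fin n → Fin (r + 1)) := by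
    rw [boxM]
    refine (finrank_span_le_card _).trans ?_
    convert Fintype.card_range_le fun μ : Fin n → Fin (r + 1) =>
      (monomial (Finsupp.equivFunOnFinite.symm fun a => (μ a : ℕ)) (1 : F))
    rfl
    rw [Set.toFinset_card]
  have h2 : Module.finrank F ((Fin n → Fin (r + 1)) → F) = Fintype.card (Fin n → Fin (r + 1)) := by
    simp [Module.finrank_pi]
  have h3 : Module.finrank F ((Fin n → Fin (r + 1)) → F) ≤ Module.finrank F (boxM n r) := by
    have := LinearMap.finrank_range_le ((ev n r).domRestrict (boxM n r))
    rwa [LinearMap.range_eq_top.2 hsurj', finrank_top] at this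
  have hinj : Function.Injective ((ev n r).domRestrict (boxM n r)) :=
    (LinearMap.injective_iff_surjective_of_finrank_eq_finrank (by omega)).2 hsurj'
  intro f hf
  have hft : f ∈ (Igrid n r).restrictScalars F ⊔ boxM n r := by
    rw [sup_top]; trivial
  obtain ⟨i, hi, m, hm, him⟩ := Submodule.mem_sup.mp hft
  have hevm : ev n r m = 0 := by
    have h := map_add (ev n r) i m
    rw [him, hf, Igrid_le_ker n r i hi, zero_add] at h
    exact h.symm
  have hm0 : m = 0 := by
    have : ((ev n r).domRestrict (boxM n r)) ⟨m, hm⟩ =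
        ((ev n r).domRestrict (boxM n r)) 0 := by
      rw [map_zero, LinearMap.domRestrict_apply, hevm]
    exact Subtype.ext_iff.mp (hinj this)
  rw [← him, hm0, add_zero]
  exact hi

end Stmt10

end

theorem stmt10 (n r : ℕ) (hn : 1 ≤ n) :
    MvPolynomial.vanishingIdeal (RatFunc ℚ)
        ((fun lam : Fin n → ℕ => fun a : Fin n => (RatFunc.X : RatFunc ℚ) ^ (lam a)) ''
          {lam : Fin n → ℕ | (∑ a, lam a) = r}) =
      Ideal.span
        ({(∏ a, MvPolynomial.X a) - MvPolynomial.C ((RatFunc.X : RatFunc ℚ) ^ r)} ∪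
          Set.range fun a : Fin n =>
            ∏ j ∈ Finset.range (r + 1),
              (MvPolynomial.X a - MvPolynomial.C ((RatFunc.X : RatFunc ℚ) ^ j))) := by
  classical
  apply le_antisymm
  · -- hard direction: vanishing ideal ≤ span
    intro f hf
    rw [MvPolynomial.mem_vanishingIdeal_iff] at hf
    set g : MvPolynomial (Fin n) (RatFunc ℚ) :=
      (∏ a, MvPolynomial.X a) - MvPolynomial.C ((RatFunc.X : RatFunc ℚ) ^ r) with hg
    set h : (Fin n → Fin (r + 1)) → RatFunc ℚ := fun μ =>
      if (∑ a, (μ a : ℕ)) = r then 0 else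
        Stmt10.ev n r f μ / Stmt10.ev n r g μ with hh
    obtain ⟨q, hq⟩ := Stmt10.ev_surj n r h
    have hevg : ∀ μ : Fin n → Fin (r + 1), MvPolynomial.eval (Stmt10.pt n r μ) g =
        (RatFunc.X : RatFunc ℚ) ^ (∑ a, (μ a : ℕ)) - (RatFunc.X : RatFunc ℚ) ^ r := by
      intro μ
      simp [hg, Stmt10.pt, Finset.prod_pow_eq_pow_sum]
    have hker : Stmt10.ev n r (f - q * g) = 0 := by
      funext μ
      have hrw : Stmt10.ev n r (f - q * g) μ = MvPolynomial.eval (Stmt10.pt n r μ) f -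
          MvPolynomial.eval (Stmt10.pt n r μ) q * MvPolynomial.eval (Stmt10.pt n r μ) g := by
        simp [Stmt10.ev_apply]
      rw [hrw]
      have hq' : MvPolynomial.eval (Stmt10.pt n r μ) q = h μ := congrFun hq μ
      by_cases hμ : (∑ a, (μ a : ℕ)) = r
      · have hf0 : MvPolynomial.eval (Stmt10.pt n r μ) f = 0 := by
          apply hf
          exact ⟨fun a => (μ a : ℕ), hμ, rfl⟩
        have hg0 : MvPolynomial.eval (Stmt10.pt n r μ) g = 0 := by
          rw [hevg μ, hμ, sub_self]
        rw [hf0, hg0, mul_zero, sub_zero]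
        simp
      · have hgne : MvPolynomial.eval (Stmt10.pt n r μ) g ≠ 0 := by
          rw [hevg μ]
          exact sub_ne_zero.2 fun hc => hμ (Stmt10.v_pow_inj hc)
        rw [hq', hh]
        simp only [if_neg hμ, Stmt10.ev_apply]
        rw [div_mul_cancel₀ _ hgne, sub_self]
        simp
    have h1 : f - q * g ∈ Stmt10.Igrid n r := Stmt10.ker_le_Igrid n r _ hker
    have h2 : f - q * g ∈ Ideal.span
        ({(∏ a, MvPolynomial.X a) - MvPolynomial.C ((RatFunc.X : RatFunc ℚ) ^ r)} ∪
          Set.range fun a : Fin n =>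
            ∏ j ∈ Finset.range (r + 1),
              (MvPolynomial.X a - MvPolynomial.C ((RatFunc.X : RatFunc ℚ) ^ j))) := by
      refine Ideal.span_mono ?_ (by rw [Stmt10.Igrid] at h1; exact h1)
      rintro _ ⟨a, rfl⟩
      exact Set.mem_union_right _ ⟨a, rfl⟩
    have h3 : q * g ∈ Ideal.span
        ({(∏ a, MvPolynomial.X a) - MvPolynomial.C ((RatFunc.X : RatFunc ℚ) ^ r)} ∪
          Set.range fun a : Fin n =>
            ∏ j ∈ Finset.range (r + 1),
              (MvPolynomial.X a - MvPolynomial.C ((RatFunc.X : RatFunc ℚ) ^ j))) :=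
      Ideal.mul_mem_left _ _ (Ideal.subset_span (Set.mem_union_left _ rfl))
    have := add_mem h2 h3
    rwa [sub_add_cancel] at this
  · -- easy direction: span ≤ vanishing ideal
    rw [Ideal.span_le]
    intro p hp
    rw [SetLike.mem_coe, MvPolynomial.mem_vanishingIdeal_iff]
    rintro x ⟨lam, hlam, rfl⟩
    have hlam' : (∑ a, lam a) = r := hlam
    rcases hp with hp | ⟨a, rfl⟩
    · rw [Set.mem_singleton_iff] at hp
      subst hp
      simp [Finset.prod_pow_eq_pow_sum, hlam']
    · rw [map_prod]
      apply Finset.prod_eq_zero (i := lam a)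
      · rw [Finset.mem_range, Nat.lt_succ_iff, ← hlam']
        exact Finset.single_le_sum (fun _ _ => Nat.zero_le _) (Finset.mem_univ a)
      · simp
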